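/- For r > 2, no word of reduced length strictly less than 2r in the free group F_r is primitivity-blocking: every word of length < 2r is a subword of some cyclically reduced primitive element. -/

import Mathlib

open FreeGroup

/-- The free group of rank `r` on the basis `Fin r`. -/
abbrev F (r : ℕ) := FreeGroup (Fin r)

/-- `v` is a subword of `u`: the reduced word of `v` occurs as a contiguous
block of the reduced word of `u`. -/
def Subword {α : Type*} [DecidableEq α] (v u : FreeGroup α) : Prop :=
  v.toWord <:+: u.toWord

/-- `u` is cyclically reduced: the first letter of its reduced word is not the
inverse of its last letter. -/
def CyclRed {α : Type*} [DecidableEq α] (u : FreeGroup α) : Prop :=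
  ∀ a ∈ u.toWord.head?, ∀ b ∈ u.toWord.getLast?, a ≠ (b.1, !b.2)

/-- `u` is primitive: some automorphism sends a generator to `u`
(equivalently, `u` belongs to a basis). -/
def IsPrimitive {α : Type*} [DecidableEq α] (u : FreeGroup α) : Prop :=
  ∃ (φ : FreeGroup α ≃* FreeGroup α) (i : α), φ (FreeGroup.of i) = u

/-- `v` is primitivity-blocking: it is not a subword of any cyclically reduced
primitive element. -/
def PrimitivityBlocking {α : Type*} [DecidableEq α] (v : FreeGroup α) : Prop :=
  ∀ u : FreeGroup α, IsPrimitive u → CyclRed u → ¬ Subword v u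

/-- Reduced word length. -/
def len {α : Type*} [DecidableEq α] (u : FreeGroup α) : ℕ := u.toWord.length

/-- `v` is `w`-orbit-blocking: for every automorphism `φ`, `v` is not a subword
of the cyclic reduction of `φ w` (i.e. of any cyclically reduced element
conjugate to `φ w`). -/
def OrbitBlocking {α : Type*} [DecidableEq α] (w v : FreeGroup α) : Prop :=
  ∀ (φ : FreeGroup α ≃* FreeGroup α) (c : FreeGroup α),
    CyclRed c → IsConj c (φ w) → ¬ Subword v c

/-- A word is slender if some generator occurs (with exponent `±1`) at most
once in its reduced word. -/
def Slender {α : Type*} [DecidableEq α] (w : FreeGroup α) : Prop :=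
  ∃ x : α, (w.toWord.countP fun p => decide (p.1 = x)) ≤ 1

/- ------------------- auxiliary lemmas ------------------- -/

section Aux

variable {α : Type*} [DecidableEq α]

lemma aux_reduced_of_chain :
    ∀ L : List (α × Bool),
      List.Chain' (fun a b : α × Bool => ¬(a.1 = b.1 ∧ a.2 = !b.2)) L →
      FreeGroup.reduce L = L := by
  intro L
  induction L with
  | nil => intro _; rfl
  | cons x L ih =>
    intro hc
    rw [FreeGroup.reduce.cons, ih hc.tail]
    cases L with
    | nil => rfl
    | cons hd tl =>
      dsimp only
      rw [if_neg (List.isChain_cons_cons.mp hc).1]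

lemma aux_chain_of_reduced :
    ∀ L : List (α × Bool), FreeGroup.reduce L = L →
      List.Chain' (fun a b : α × Bool => ¬(a.1 = b.1 ∧ a.2 = !b.2)) L := by
  intro L
  induction L with
  | nil => intro _; exact List.isChain_nil
  | cons x L ih =>
    intro h
    rw [FreeGroup.reduce.cons] at h
    rcases hL : FreeGroup.reduce L with _ | ⟨hd, tl⟩
    · rw [hL] at h
      dsimp at h
      have : L = [] := by injection h with h1 h2; exact h2.symm
      subst this
      exact List.isChain_singleton x
    · rw [hL] at h
      dsimp only at h
      split_ifs at h with hcond
      · exfalso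
        have h1 : (FreeGroup.reduce L).length ≤ L.length :=
          (FreeGroup.Red.sublist FreeGroup.reduce.red).length_le
        rw [hL] at h1
        have h2 := congrArg List.length h
        simp at h1 h2
        omega
      · have h2 : hd :: tl = L := by injection h
        rw [← h2]
        refine List.isChain_cons_cons.mpr ⟨hcond, ?_⟩
        rw [h2]
        exact ih (hL.trans h2)

lemma aux_reduced_append (L : List (α × Bool)) (y : α × Bool)
    (hL : FreeGroup.reduce L = L)
    (hy : ∀ a ∈ L.getLast?, ¬(a.1 = y.1 ∧ a.2 = !y.2)) :
    FreeGroup.reduce (L ++ [y]) = L ++ [y] := by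
  apply aux_reduced_of_chain
  rw [List.Chain', List.isChain_append]
  refine ⟨aux_chain_of_reduced L hL, List.isChain_singleton y, ?_⟩
  intro a ha b hb
  simp only [List.head?_cons, Option.mem_some_iff] at hb
  subst hb
  exact hy a ha

lemma aux_mk_singleton_false (a : α) :
    FreeGroup.mk [(a, false)] = (FreeGroup.of a)⁻¹ := by
  apply eq_inv_of_mul_eq_one_left
  rw [FreeGroup.of, FreeGroup.mul_mk, FreeGroup.one_eq_mk]
  apply FreeGroup.reduce.exact
  simp [FreeGroup.reduce]

lemma aux_lift_fix (f : α → FreeGroup α) (k : α)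
    (hf : ∀ i, i ≠ k → f i = FreeGroup.of i)
    (C : List (α × Bool)) (hC : ∀ x ∈ C, x.1 ≠ k) :
    FreeGroup.lift f (FreeGroup.mk C) = FreeGroup.mk C := by
  conv_rhs => rw [← FreeGroup.lift_of_apply (FreeGroup.mk C)]
  rw [FreeGroup.lift_mk, FreeGroup.lift_mk]
  congr 1
  apply List.map_congr_left
  intro x hx
  rw [hf x.1 (hC x hx)]

end Aux

lemma aux_prim {r : ℕ} (k : Fin r) (ε : Bool) (A B : List (Fin r × Bool))
    (hA : ∀ x ∈ A, x.1 ≠ k) (hB : ∀ x ∈ B, x.1 ≠ k) :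
    IsPrimitive (FreeGroup.mk (A ++ (k, ε) :: B)) := by
  set a : F r := FreeGroup.mk A with ha
  set b : F r := FreeGroup.mk B with hb
  set x : F r := FreeGroup.mk [(k, ε)] with hx
  have hsplit : FreeGroup.mk (A ++ (k, ε) :: B) = a * x * b := by
    rw [ha, hb, hx, FreeGroup.mul_mk, FreeGroup.mul_mk, List.append_assoc]; rfl
  set f : Fin r → F r := fun i => if i = k then a * x * b else FreeGroup.of i with hf
  set g : Fin r → F r := fun i =>
    if i = k then (cond ε (a⁻¹ * FreeGroup.of k * b⁻¹) (b * (FreeGroup.of k)⁻¹ * a))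
    else FreeGroup.of i with hg
  have hf' : ∀ i, i ≠ k → f i = FreeGroup.of i := fun i hi => by simp [hf, hi]
  have hg' : ∀ i, i ≠ k → g i = FreeGroup.of i := fun i hi => by simp [hg, hi]
  have hfa : FreeGroup.lift f a = a := aux_lift_fix f k hf' A hA
  have hfb : FreeGroup.lift f b = b := aux_lift_fix f k hf' B hB
  have hga : FreeGroup.lift g a = a := aux_lift_fix g k hg' A hA
  have hgb : FreeGroup.lift g b = b := aux_lift_fix g k hg' B hB
  have hxval : x = cond ε (FreeGroup.of k) (FreeGroup.of k)⁻¹ := by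
    cases ε
    · exact aux_mk_singleton_false k
    · rfl
  have h1 : (FreeGroup.lift g).comp (FreeGroup.lift f) = MonoidHom.id (F r) := by
    apply FreeGroup.ext_hom
    intro i
    simp only [MonoidHom.comp_apply, MonoidHom.id_apply, FreeGroup.lift_apply_of]
    by_cases hi : i = k
    · subst hi
      have hfi : f i = a * x * b := by simp [hf]
      rw [hfi, _root_.map_mul, _root_.map_mul, hga, hgb]
      cases ε
      · have hx' : x = (FreeGroup.of i)⁻¹ := hxval
        have hg'' : g i = b * (FreeGroup.of i)⁻¹ * a := by simp [hg]
        rw [hx', _root_.map_inv, FreeGroup.lift_apply_of, hg'']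
        group
      · have hx' : x = FreeGroup.of i := hxval
        have hg'' : g i = a⁻¹ * FreeGroup.of i * b⁻¹ := by simp [hg]
        rw [hx', FreeGroup.lift_apply_of, hg'']
        group
    · rw [hf' i hi, FreeGroup.lift_apply_of, hg' i hi]
  have h2 : (FreeGroup.lift f).comp (FreeGroup.lift g) = MonoidHom.id (F r) := by
    apply FreeGroup.ext_hom
    intro i
    simp only [MonoidHom.comp_apply, MonoidHom.id_apply, FreeGroup.lift_apply_of]
    by_cases hi : i = k
    · subst hi
      have hfi : f i = a * x * b := by simp [hf]
      cases ε
      · have hx' : x = (FreeGroup.of i)⁻¹ := hxval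
        have hg'' : g i = b * (FreeGroup.of i)⁻¹ * a := by simp [hg]
        rw [hg'', _root_.map_mul, _root_.map_mul, _root_.map_inv, hfa, hfb,
          FreeGroup.lift_apply_of, hfi, hx']
        group
      · have hx' : x = FreeGroup.of i := hxval
        have hg'' : g i = a⁻¹ * FreeGroup.of i * b⁻¹ := by simp [hg]
        rw [hg'', _root_.map_mul, _root_.map_mul, _root_.map_inv, _root_.map_inv, hfa, hfb,
          FreeGroup.lift_apply_of, hfi, hx']
        group
    · rw [hg' i hi, FreeGroup.lift_apply_of, hf' i hi]
  refine ⟨MonoidHom.toMulEquiv (FreeGroup.lift f) (FreeGroup.lift g) h1 h2, k, ?_⟩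
  show FreeGroup.lift f (FreeGroup.of k) = _
  rw [FreeGroup.lift_apply_of, hsplit]
  simp [hf]

lemma aux_sum_countP {r : ℕ} (L : List (Fin r × Bool)) :
    ∑ k : Fin r, L.countP (fun p => decide (p.1 = k)) = L.length := by
  induction L with
  | nil => simp
  | cons x L ih =>
    simp only [List.countP_cons, List.length_cons, Finset.sum_add_distrib, ih]
    congr 1
    rw [Finset.sum_eq_single x.1]
    · simp
    · intro b _ hb
      simp [Ne.symm hb]
    · simp

lemma aux_countP_split {α : Type*} (q : α → Bool) :
    ∀ (L : List α), L.countP q = 1 →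
      ∃ A x B, L = A ++ x :: B ∧ q x ∧ A.countP q = 0 ∧ B.countP q = 0 := by
  intro L
  induction L with
  | nil => simp
  | cons y L ih =>
    intro h
    rw [List.countP_cons] at h
    by_cases hy : q y
    · refine ⟨[], y, L, rfl, hy, rfl, ?_⟩
      rw [if_pos hy] at h
      omega
    · have h' : L.countP q = 1 := by rw [if_neg hy] at h; omega
      obtain ⟨A, x, B, h1, h2, h3, h4⟩ := ih h'
      exact ⟨y :: A, x, B, by simp [h1], h2, by simp [List.countP_cons, hy, h3], h4⟩

lemma aux_two_bad {β : Type*} (a b : Option (β × Bool)) (j₁ j₂ : β) (h12 : j₁ ≠ j₂)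
    (h₁ : (a = some (j₁, false) ∨ b = some (j₁, false)) ∧
          (a = some (j₁, true) ∨ b = some (j₁, true)))
    (h₂ : (a = some (j₂, false) ∨ b = some (j₂, false)) ∧
          (a = some (j₂, true) ∨ b = some (j₂, true))) : False := by
  obtain ⟨hP₁, hQ₁⟩ := h₁
  obtain ⟨hP₂, hQ₂⟩ := h₂
  rcases hP₁ with hP₁ | hP₁ <;> rcases hP₂ with hP₂ | hP₂ <;>
    rcases hQ₁ with hQ₁ | hQ₁ <;> rcases hQ₂ with hQ₂ | hQ₂ <;> simp_all

/-- for `r > 2`, no word of length `< 2r` is primitivity-blocking. -/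
theorem stmt9 (r : ℕ) (hr : 2 < r) (u : F r) (h : len u < 2 * r) :
    ∃ p : F r, IsPrimitive p ∧ CyclRed p ∧ Subword u p := by
  set L : List (Fin r × Bool) := u.toWord with hL
  have hLred : FreeGroup.reduce L = L := FreeGroup.reduce_toWord u
  -- find a generator occurring at most once
  have hex : ∃ k : Fin r, L.countP (fun p => decide (p.1 = k)) ≤ 1 := by
    by_contra hc
    push_neg at hc
    have hs : 2 * r ≤ L.length := by
      calc 2 * r = ∑ _k : Fin r, 2 := by simp [Finset.sum_const, mul_comm]
        _ ≤ ∑ k : Fin r, L.countP (fun p => decide (p.1 = k)) :=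
            Finset.sum_le_sum fun k _ => hc k
        _ = L.length := aux_sum_countP L
    have : L.length < 2 * r := h
    omega
  obtain ⟨k, hk⟩ := hex
  interval_cases hcount : (L.countP (fun p => decide (p.1 = k)))
  · -- k does not occur in L
    have hA : ∀ x ∈ L, x.1 ≠ k := by
      intro x hx
      have := List.countP_eq_zero.mp hcount x hx
      simpa using this
    set M : List (Fin r × Bool) := L ++ [(k, true)] with hM
    have hMred : FreeGroup.reduce M = M := by
      apply aux_reduced_append L _ hLred
      intro a ha hcontr
      exact hA a (List.mem_of_mem_getLast? ha) hcontr.1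
    have hword : (FreeGroup.mk M).toWord = M := by rw [FreeGroup.toWord_mk, hMred]
    refine ⟨FreeGroup.mk M, ?_, ?_, ?_⟩
    · have : M = L ++ (k, true) :: [] := by simp [hM]
      rw [this]
      exact aux_prim k true L [] hA (by simp)
    · intro a ha b hb
      rw [hword] at ha hb
      rw [hM, List.getLast?_concat] at hb
      simp only [Option.mem_some_iff] at hb
      subst hb
      by_cases hLn : L = []
      · rw [hM, hLn] at ha
        simp only [List.nil_append, List.head?_cons, Option.mem_some_iff] at ha
        subst ha
        simp
      · rw [hM, List.head?_append_of_ne_nil _ hLn] at ha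
        have haL : a ∈ L := List.mem_of_mem_head? ha
        intro hcontr
        exact hA a haL (by rw [hcontr])
    · rw [Subword, hword, hM, ← hL]
      exact (List.prefix_append L [(k, true)]).isInfix
  · -- k occurs exactly once
    obtain ⟨A, m, B, hLdec, hqm, hA0, hB0⟩ :=
      aux_countP_split (fun p => decide (p.1 = k)) L hcount
    have hA : ∀ x ∈ A, x.1 ≠ k := by
      intro x hx
      have := List.countP_eq_zero.mp hA0 x hx
      simpa using this
    have hB : ∀ x ∈ B, x.1 ≠ k := by
      intro x hx
      have := List.countP_eq_zero.mp hB0 x hx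
      simpa using this
    have hm1 : m.1 = k := by simpa using hqm
    have hmk : m = (k, m.2) := by rw [← hm1]
    -- choose a letter (j, s) to append
    have hLne : L ≠ [] := by rw [hLdec]; simp
    have hjs : ∃ (j : Fin r) (s : Bool), j ≠ k ∧
        L.head? ≠ some (j, !s) ∧ L.getLast? ≠ some (j, !s) := by
      have h2card : 1 < (Finset.univ.erase k).card := by
        rw [Finset.card_erase_of_mem (Finset.mem_univ k), Finset.card_univ, Fintype.card_fin]
        omega
      obtain ⟨j₁, hj₁, j₂, hj₂, hj12⟩ := Finset.one_lt_card.mp h2card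
      have hj₁k : j₁ ≠ k := Finset.ne_of_mem_erase hj₁
      have hj₂k : j₂ ≠ k := Finset.ne_of_mem_erase hj₂
      set a? := L.head?
      set b? := L.getLast?
      have key : ∀ j : Fin r, j ≠ k →
          ((a? = some (j, false) ∨ b? = some (j, false)) ∧
           (a? = some (j, true) ∨ b? = some (j, true))) ∨
          ∃ s : Bool, a? ≠ some (j, !s) ∧ b? ≠ some (j, !s) := by
        intro j _
        by_cases hP : a? = some (j, false) ∨ b? = some (j, false)
        · by_cases hQ : a? = some (j, true) ∨ b? = some (j, true)
          · exact Or.inl ⟨hP, hQ⟩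
          · push_neg at hQ
            exact Or.inr ⟨false, by simpa using hQ.1, by simpa using hQ.2⟩
        · push_neg at hP
          exact Or.inr ⟨true, by simpa using hP.1, by simpa using hP.2⟩
      rcases key j₁ hj₁k with hbad₁ | ⟨s, hs1, hs2⟩
      · rcases key j₂ hj₂k with hbad₂ | ⟨s, hs1, hs2⟩
        · exact absurd (aux_two_bad a? b? j₁ j₂ hj12 hbad₁ hbad₂) not_false
        · exact ⟨j₂, s, hj₂k, hs1, hs2⟩
      · exact ⟨j₁, s, hj₁k, hs1, hs2⟩
    obtain ⟨j, s, hjk, hhead, hlast⟩ := hjs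
    set M : List (Fin r × Bool) := L ++ [(j, s)] with hM
    have hMred : FreeGroup.reduce M = M := by
      apply aux_reduced_append L _ hLred
      intro a ha hcontr
      apply hlast
      have ha' : L.getLast? = some a := ha
      rw [ha']
      exact congrArg some (Prod.ext hcontr.1 hcontr.2)
    have hword : (FreeGroup.mk M).toWord = M := by rw [FreeGroup.toWord_mk, hMred]
    refine ⟨FreeGroup.mk M, ?_, ?_, ?_⟩
    · have hMdec : M = A ++ (k, m.2) :: (B ++ [(j, s)]) := by
        rw [hM, hLdec, ← hmk]
        simp
      rw [hMdec]
      apply aux_prim k m.2 A (B ++ [(j, s)]) hA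
      intro x hx
      rcases List.mem_append.mp hx with hx | hx
      · exact hB x hx
      · simp at hx
        rw [hx]
        exact hjk
    · intro a ha b hb
      rw [hword] at ha hb
      rw [hM, List.getLast?_concat] at hb
      simp only [Option.mem_some_iff] at hb
      subst hb
      intro hcontr
      apply hhead
      rw [hM, List.head?_append_of_ne_nil _ hLne] at ha
      have ha' : L.head? = some a := ha
      rw [ha', hcontr]
    · rw [Subword, hword, hM, ← hL]
      exact (List.prefix_append L [(j, s)]).isInfix
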